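/- Let F : ℝ^d → ℝ be differentiable with L_θ-Lipschitz gradient (L_θ > 0). Let θ ∈ ℝ^d, g̃ ∈ ℝ^d, and let 0 < η ≤ 1/(4L_θ). Set θ⁺ := θ + η g̃. Then η‖∇F(θ)‖² ≤ 4(F(θ⁺) − F(θ)) + 3η‖∇F(θ) − g̃‖². -/

import Mathlib

open InnerProductSpace

local notation "⟪" x ", " y "⟫" => @inner ℝ _ _ x y

lemma fderiv_apply_eq_inner_gradient {d : ℕ} (F : EuclideanSpace ℝ (Fin d) → ℝ)
    (x v : EuclideanSpace ℝ (Fin d)) :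
    fderiv ℝ F x v = ⟪gradient F x, v⟫ := by
  simp [gradient]

set_option maxHeartbeats 1000000 in
/-- Descent lemma (lower-bound form). -/
lemma descent_aux {d : ℕ} (F : EuclideanSpace ℝ (Fin d) → ℝ) (L : ℝ) (hL : 0 ≤ L)
    (hF : Differentiable ℝ F)
    (hLip : ∀ x y, ‖gradient F x - gradient F y‖ ≤ L * ‖x - y‖)
    (x v : EuclideanSpace ℝ (Fin d)) :
    F x + ⟪gradient F x, v⟫ - L / 2 * ‖v‖ ^ 2 ≤ F (x + v) := by
  set g := gradient F with hg
  set ψ : ℝ → ℝ := fun t => F (x + t • v) - t * ⟪g x, v⟫ + L * ‖v‖ ^ 2 * t ^ 2 / 2 with hψ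
  have hγ : ∀ t : ℝ, HasDerivAt (fun s : ℝ => x + s • v) v t := by
    intro t
    simpa using ((hasDerivAt_id t).smul_const v).const_add x
  have hψ' : ∀ t : ℝ, HasDerivAt ψ
      (⟪g (x + t • v), v⟫ - ⟪g x, v⟫ + L * ‖v‖ ^ 2 * t) t := by
    intro t
    have h1 : HasDerivAt (fun s : ℝ => F (x + s • v)) (⟪g (x + t • v), v⟫) t := by
      have := ((hF (x + t • v)).hasFDerivAt).comp_hasDerivAt t (hγ t)
      rw [fderiv_apply_eq_inner_gradient] at this
      exact this
    have h2 : HasDerivAt (fun s : ℝ => s * ⟪g x, v⟫) (⟪g x, v⟫) t := by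
      simpa using (hasDerivAt_id t).mul_const (⟪g x, v⟫)
    have h3 : HasDerivAt (fun s : ℝ => L * ‖v‖ ^ 2 * s ^ 2 / 2) (L * ‖v‖ ^ 2 * t) t := by
      have : HasDerivAt (fun s : ℝ => s ^ 2) (2 * t) t := by
        simpa using hasDerivAt_pow 2 t
      have := (this.const_mul (L * ‖v‖ ^ 2)).div_const 2
      exact this.congr_deriv (by ring)
    rw [hψ]
    exact (h1.sub h2).add h3
  have hmono : MonotoneOn ψ (Set.Icc (0 : ℝ) 1) := by
    apply monotoneOn_of_deriv_nonneg (convex_Icc 0 1)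
    · exact Continuous.continuousOn (by
        have : Continuous ψ := by
          apply Continuous.add
          · exact ((hF.continuous.comp (by continuity)).sub (by continuity))
          · continuity
        exact this)
    · intro t ht
      exact ((hψ' t).differentiableAt).differentiableWithinAt
    · intro t ht
      rw [(hψ' t).deriv]
      have ht0 : 0 ≤ t := by
        rw [interior_Icc] at ht; exact le_of_lt ht.1
      have h1 : ⟪g x, v⟫ - ⟪g (x + t • v), v⟫ ≤ L * ‖v‖ ^ 2 * t := by
        have := real_inner_le_norm (g x - g (x + t • v)) v
        have h2 := hLip x (x + t • v)
        have h3 : ‖x - (x + t • v)‖ = t * ‖v‖ := by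
          simp [norm_smul, abs_of_nonneg ht0]
        rw [h3] at h2
        have h4 : ⟪g x - g (x + t • v), v⟫ = ⟪g x, v⟫ - ⟪g (x + t • v), v⟫ := by
          rw [inner_sub_left]
        rw [h4] at this
        have h5 : ‖g x - g (x + t • v)‖ * ‖v‖ ≤ L * (t * ‖v‖) * ‖v‖ :=
          mul_le_mul_of_nonneg_right h2 (norm_nonneg v)
        nlinarith [this]
      linarith
  have key := hmono (Set.left_mem_Icc.2 zero_le_one) (Set.right_mem_Icc.2 zero_le_one)
    zero_le_one
  simp only [hψ, zero_smul, add_zero, one_smul, zero_mul, zero_pow, one_pow, mul_one,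
    one_mul, sub_zero, mul_zero, zero_div] at key
  linarith

/-- Single-step inexact gradient-ascent inequality (key estimate in the proof
of Theorem 1): for `F` with `Lθ`-Lipschitz gradient, `0 < η ≤ 1/(4Lθ)` and
`θ⁺ = θ + η g̃`, one has `η‖∇F(θ)‖² ≤ 4(F(θ⁺) − F(θ)) + 3η‖∇F(θ) − g̃‖²`. -/
theorem stmt4 {d : ℕ} (F : EuclideanSpace ℝ (Fin d) → ℝ) (Lθ : ℝ) (hLθ : 0 < Lθ)
    (hF : Differentiable ℝ F)
    (hLip : ∀ x y, ‖gradient F x - gradient F y‖ ≤ Lθ * ‖x - y‖)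
    (θ gt : EuclideanSpace ℝ (Fin d)) (η : ℝ) (hη : 0 < η) (hη' : η ≤ 1 / (4 * Lθ)) :
    η * ‖gradient F θ‖ ^ 2 ≤
      4 * (F (θ + η • gt) - F θ) + 3 * η * ‖gradient F θ - gt‖ ^ 2 := by
  have hd := descent_aux F Lθ hLθ.le hF hLip θ (η • gt)
  set g := gradient F θ
  have hinner : ⟪g, η • gt⟫ = η * ⟪g, gt⟫ := real_inner_smul_right g gt η
  have hnorm : ‖η • gt‖ ^ 2 = η ^ 2 * ‖gt‖ ^ 2 := by
    rw [norm_smul]; rw [Real.norm_eq_abs, mul_pow, sq_abs]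
  rw [hinner, hnorm] at hd
  -- inner product identities
  have e1 : ⟪g, gt⟫ = ‖g‖ ^ 2 - ⟪g, g - gt⟫ := by
    rw [inner_sub_right, real_inner_self_eq_norm_sq]; ring
  have e2 : ‖gt‖ ^ 2 = ‖g‖ ^ 2 - 2 * ⟪g, g - gt⟫ + ‖g - gt‖ ^ 2 := by
    have h := norm_sub_sq_real g (g - gt)
    rw [sub_sub_cancel] at h
    rw [h, inner_sub_right, real_inner_self_eq_norm_sq]
  have e3 : ⟪g, g - gt⟫ ≤ ‖g‖ * ‖g - gt‖ := real_inner_le_norm g (g - gt)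
  have hLη : Lθ * η ≤ 1 / 4 := by
    rw [le_div_iff₀ (by positivity)] at hη'
    nlinarith
  nlinarith [sq_nonneg (‖g‖ - ‖g - gt‖), sq_nonneg ‖gt‖, mul_pos hη hη,
    mul_nonneg (mul_nonneg hLθ.le hη.le) (mul_nonneg hη.le (sq_nonneg ‖gt‖)),
    sq_nonneg (‖g‖ + ‖g - gt‖), hη.le]
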